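/- (Power chain rule) Let t ∈ ℝ with t ∉ S, let g : ℝ → ℝ be continuous on the closed interval with endpoints q·t^n and t, and let f : ℝ → ℝ be continuously differentiable. Then there exists a real number c in the closed interval with endpoints q·t^n and t such that D_{n,q}(f ∘ g)(t) = f′(g(c))·D_{n,q} g(t). -/

import Mathlib

open Filter
open scoped Classical

noncomputable section

/-- `[k]_n = ∑_{i=0}^{k-1} n^i` (so `[0]_n = 0`). -/
def nbr (n k : ℕ) : ℕ := ∑ i ∈ Finset.range k, n ^ i

/-- `h(t) = q·t^n`. -/
def hfun (q : ℝ) (n : ℕ) (t : ℝ) : ℝ := q * t ^ n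

/-- `θ = q^(1/(1-n))` (meaningful for `n ≥ 3`). -/
def theta (q : ℝ) (n : ℕ) : ℝ := q ^ ((1 : ℝ) / (1 - (n : ℝ)))

/-- `S = {0}` if `n = 1`, and `S = {-θ, 0, θ}` if `n ≥ 3`. -/
def Sset (q : ℝ) (n : ℕ) : Set ℝ :=
  if n = 1 then {0} else {-theta q n, 0, theta q n}

/-- `I = (-θ, θ)` (all of `ℝ` when `n = 1`). -/
def Iset (q : ℝ) (n : ℕ) : Set ℝ :=
  if n = 1 then Set.univ else Set.Ioo (-theta q n) (theta q n)

/-- The `n,q`-power difference operator `D_{n,q}`. -/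
def Dnq (q : ℝ) (n : ℕ) (f : ℝ → ℝ) (t : ℝ) : ℝ :=
  if t ∈ Sset q n then deriv f t
  else (f (q * t ^ n) - f t) / (q * t ^ n - t)

/-- The `k`-th summand of the series defining the `n,q`-integral `∫_0^x f(t) d_{n,q}t`. -/
def nqSeq (q : ℝ) (n : ℕ) (f : ℝ → ℝ) (x : ℝ) (k : ℕ) : ℝ :=
  q ^ nbr n k * x ^ n ^ k * (q ^ n ^ k * x ^ (n ^ k * (n - 1)) - 1) *
    f (q ^ nbr n k * x ^ n ^ k)

/-- `∫_0^x f(t) d_{n,q}t`. -/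
def nqInt0 (q : ℝ) (n : ℕ) (f : ℝ → ℝ) (x : ℝ) : ℝ := -∑' k : ℕ, nqSeq q n f x k

/-- `∫_a^b f(t) d_{n,q}t = ∫_0^b f(t) d_{n,q}t − ∫_0^a f(t) d_{n,q}t`. -/
def nqInt (q : ℝ) (n : ℕ) (f : ℝ → ℝ) (a b : ℝ) : ℝ :=
  nqInt0 q n f b - nqInt0 q n f a

/-- The orbit `[s]_{n,q} = {q^{[k]_n}·s^{n^k} : k ∈ ℕ}`. -/
def nqOrbit (q : ℝ) (n : ℕ) (s : ℝ) : Set ℝ :=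
  Set.range fun k : ℕ => q ^ nbr n k * s ^ n ^ k

/-- The `n,q`-interval `[a,b]_{n,q}`. -/
def nqInterval (q : ℝ) (n : ℕ) (a b : ℝ) : Set ℝ :=
  nqOrbit q n a ∪ nqOrbit q n b ∪ {0}


lemma fixpt_mem_S (q : ℝ) (hq0 : 0 < q) (hq1 : q < 1) (n : ℕ) (hn : Odd n)
    (t : ℝ) (heq : q * t ^ n = t) : t ∈ Sset q n := by
  rcases eq_or_ne n 1 with h1 | h1
  · subst h1
    simp only [Sset, if_pos rfl, Set.mem_singleton_iff]
    rw [pow_one] at heq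
    have h : (q - 1) * t = 0 := by linarith
    exact (mul_eq_zero.mp h).resolve_left (by linarith)
  · have hn3 : 3 ≤ n := by
      rcases hn with ⟨k, hk⟩
      omega
    by_cases ht0 : t = 0
    · simp [Sset, h1, ht0]
    · -- t ≠ 0, so t^(n-1) = 1/q
      have hpow : t ^ (n - 1) = q⁻¹ := by
        have h2 : q * t ^ n = t := heq
        have h3 : t ^ n = t ^ (n - 1) * t := by
          rw [← pow_succ]
          congr 1
          omega
        rw [h3] at h2
        have h4 : (q * t ^ (n - 1)) * t = 1 * t := by linarith [h2]
        have h5 : q * t ^ (n - 1) = 1 := mul_right_cancel₀ ht0 h4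
        field_simp
        linarith [h5]
      have hth : theta q n ^ (n - 1) = q⁻¹ := by
        unfold theta
        rw [← Real.rpow_natCast (q ^ ((1:ℝ)/(1 - (n:ℝ)))) (n - 1),
          ← Real.rpow_mul hq0.le]
        have : (1:ℝ) / (1 - (n:ℝ)) * ((n:ℕ) - 1 : ℕ) = -1 := by
          have : ((n - 1 : ℕ) : ℝ) = (n:ℝ) - 1 := by
            push_cast [Nat.cast_sub (by omega : 1 ≤ n)]
            ring
          rw [this]
          have hne : (1:ℝ) - (n:ℝ) ≠ 0 := by
            have : (3:ℝ) ≤ (n:ℝ) := by exact_mod_cast hn3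
            linarith
          field_simp
          ring
        rw [this, Real.rpow_neg_one]
      have hthpos : 0 < theta q n := Real.rpow_pos_of_pos hq0 _
      have habs : |t| = theta q n := by
        have hmeven : Even (n - 1) := by
          rcases hn with ⟨k, hk⟩
          exact ⟨k, by omega⟩
        have h4 : |t| ^ (n - 1) = theta q n ^ (n - 1) := by
          rw [hmeven.pow_abs, hpow, hth]
        have hm0 : n - 1 ≠ 0 := by omega
        exact (pow_left_strictMonoOn₀ hm0).injOn (abs_nonneg t) hthpos.le h4
      rcases abs_eq hthpos.le |>.mp habs with h | h <;>
        simp [Sset, h1, h]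

theorem stmt7 (q : ℝ) (hq0 : 0 < q) (hq1 : q < 1) (n : ℕ) (hn : Odd n)
    (t : ℝ) (ht : t ∉ Sset q n) (g f : ℝ → ℝ)
    (hg : ContinuousOn g (Set.uIcc (q * t ^ n) t))
    (hf : ContDiff ℝ 1 f) :
    ∃ c ∈ Set.uIcc (q * t ^ n) t,
      Dnq q n (f ∘ g) t = deriv f (g c) * Dnq q n g t := by
  have hne : q * t ^ n ≠ t := fun h => ht (fixpt_mem_S q hq0 hq1 n hn t h)
  have hsub : q * t ^ n - t ≠ 0 := sub_ne_zero.mpr hne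
  set a := q * t ^ n with ha
  have hDfg : Dnq q n (f ∘ g) t = (f (g a) - f (g t)) / (a - t) := by
    simp [Dnq, ht, Function.comp]
    rfl
  have hDg : Dnq q n g t = (g a - g t) / (a - t) := by
    simp [Dnq, ht]
    rfl
  set u := g a with hu
  set v := g t with hv
  rcases eq_or_ne u v with huv | huv
  · refine ⟨t, Set.right_mem_uIcc, ?_⟩
    rw [hDfg, hDg, ← hv, huv]
    simp
  · -- MVT gives y strictly between u and v
    have hdiff : Differentiable ℝ f := hf.differentiable one_ne_zero
    have key : ∃ y ∈ Set.uIcc u v, f u - f v = deriv f y * (u - v) := by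
      rcases huv.lt_or_gt with hlt | hlt
      · obtain ⟨y, hy, hd⟩ := exists_hasDerivAt_eq_slope f (deriv f) hlt
          hf.continuous.continuousOn (fun x _ => (hdiff x).hasDerivAt)
        refine ⟨y, ?_, ?_⟩
        · rw [Set.uIcc_of_le hlt.le]
          exact Set.Ioo_subset_Icc_self hy
        · rw [hd, div_mul_eq_mul_div, eq_div_iff (sub_ne_zero.mpr hlt.ne')]
          ring
      · obtain ⟨y, hy, hd⟩ := exists_hasDerivAt_eq_slope f (deriv f) hlt
          hf.continuous.continuousOn (fun x _ => (hdiff x).hasDerivAt)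
        refine ⟨y, ?_, ?_⟩
        · rw [Set.uIcc_of_ge hlt.le]
          exact Set.Ioo_subset_Icc_self hy
        · rw [hd, div_mul_eq_mul_div, eq_div_iff (sub_ne_zero.mpr hlt.ne')]
    obtain ⟨y, hy, hslope⟩ := key
    have hmem : y ∈ g '' Set.uIcc a t := intermediate_value_uIcc hg hy
    obtain ⟨c, hc, hgc⟩ := hmem
    refine ⟨c, hc, ?_⟩
    rw [hDfg, hDg, hgc, hslope, mul_div_assoc]
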